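/- Let n be a natural number, let d be the orientation of the complete graph on Fin n defined by d S := S.max' (the maximum element of S), and let e be any permutation of Fin n. Then m d (D e d) is even if and only if Equiv.Perm.sign e = 1, where D e d is the orientation defined by (D e d) S := e (d (S.image e⁻¹)). -/

import Mathlib

/-- An orientation of the complete graph on `X` assigns to each 2-element subset of `X`
one of its elements. -/
def GraphOrientation (X : Type*) [DecidableEq X] : Type _ :=
  (S : {S : Finset X // S.card = 2}) → {x : X // x ∈ S.val}

/-- The number `m u v` of relative inversions of two orientations: the number of 2-element
subsets on which they differ. -/
noncomputable def m {X : Type*} [Fintype X] [DecidableEq X] (u v : GraphOrientation X) : ℕ :=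
  Nat.card {S : {S : Finset X // S.card = 2} // u S ≠ v S}

/-- The canonical orientation `d` of the complete graph on `Fin n`, assigning to each
2-element subset its maximum. -/
def d (n : ℕ) : GraphOrientation (Fin n) :=
  fun S =>
    ⟨S.val.max' (Finset.card_pos.mp (by rw [S.prop]; norm_num)), S.val.max'_mem _⟩

/-- The action of a permutation `e` of `Fin n` on orientations of the complete graph,
`(D e u) S := e (u (S.image e⁻¹))`. -/
def D {n : ℕ} (e : Equiv.Perm (Fin n)) (u : GraphOrientation (Fin n)) :
    GraphOrientation (Fin n) :=
  fun S =>
    let T : {S : Finset (Fin n) // S.card = 2} :=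
      ⟨S.val.image ⇑e⁻¹, by
        rw [Finset.card_image_of_injective _ (Equiv.injective _)]
        exact S.prop⟩
    ⟨e (u T), by
      obtain ⟨a, ha, hay⟩ := Finset.mem_image.mp (u T).prop
      rw [← hay]
      simpa using ha⟩

open Finset Equiv

lemma aux_max'_pair {n : ℕ} {s : Finset (Fin n)} {a b : Fin n} (h : s = {a, b})
    (hs : s.Nonempty) : s.max' hs = max a b := by
  subst h
  apply le_antisymm
  · refine Finset.max'_le _ _ _ fun y hy => ?_
    rcases Finset.mem_insert.mp hy with rfl | hy
    · exact le_max_left _ _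
    · rw [Finset.mem_singleton.mp hy]; exact le_max_right _ _
  · rcases le_total a b with hab | hab
    · rw [max_eq_right hab]; exact Finset.le_max' _ _ (by simp)
    · rw [max_eq_left hab]; exact Finset.le_max' _ _ (by simp)

lemma aux_min'_pair {n : ℕ} {s : Finset (Fin n)} {a b : Fin n} (h : s = {a, b})
    (hs : s.Nonempty) : s.min' hs = min a b := by
  subst h
  apply le_antisymm
  · rcases le_total a b with hab | hab
    · rw [min_eq_left hab]; exact Finset.min'_le _ _ (by simp)
    · rw [min_eq_right hab]; exact Finset.min'_le _ _ (by simp)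
  · refine Finset.le_min' _ _ _ fun y hy => ?_
    rcases Finset.mem_insert.mp hy with rfl | hy
    · exact min_le_left _ _
    · rw [Finset.mem_singleton.mp hy]; exact min_le_right _ _

lemma aux_ne (n : ℕ) (S : {S : Finset (Fin n) // S.card = 2}) : S.val.Nonempty :=
  Finset.card_pos.mp (by rw [S.prop]; norm_num)

/-- The differing condition in coordinates. -/
lemma aux_differ {n : ℕ} (e : Equiv.Perm (Fin n)) (S : {S : Finset (Fin n) // S.card = 2})
    {a b : Fin n} (hba : b < a) (hS : S.val = {a, b}) :
    d n S ≠ D e (d n) S ↔ e⁻¹ a ≤ e⁻¹ b := by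
  have himg : S.val.image ⇑e⁻¹ = {e⁻¹ a, e⁻¹ b} := by
    rw [hS]; simp [Finset.image_insert]
  have hne' : (S.val.image ⇑e⁻¹).Nonempty := by
    rw [himg]; exact Finset.insert_nonempty _ _
  have h1 : (d n S).val = max a b := aux_max'_pair hS (aux_ne n S)
  have h2 : (D e (d n) S).val = e (max (e⁻¹ a) (e⁻¹ b)) :=
    congrArg e (aux_max'_pair himg hne')
  rw [Ne, ← Subtype.coe_inj, h1, h2, max_eq_left hba.le]
  constructor
  · intro h
    by_contra hle
    push_neg at hle
    rw [max_eq_left hle.le] at h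
    exact h (e.apply_symm_apply a).symm
  · intro hle h
    rw [max_eq_right hle, (by simp : e (e⁻¹ b) = b)] at h
    exact absurd h hba.ne'

lemma aux_m_eq {n : ℕ} (e : Equiv.Perm (Fin n)) :
    m (d n) (D e (d n)) =
      ((Equiv.Perm.finPairsLT n).filter fun x => e⁻¹ x.1 ≤ e⁻¹ x.2).card := by
  classical
  rw [m, Nat.card_eq_fintype_card, Fintype.card_subtype]
  refine Finset.card_bij'
    (i := fun S _ => (⟨S.val.max' (aux_ne n S), S.val.min' (aux_ne n S)⟩ : Σ _ : Fin n, Fin n))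
    (j := fun x hx => ⟨{x.1, x.2}, ?_⟩) ?_ ?_ ?_ ?_
  · -- card of pair
    rw [Finset.mem_filter, Equiv.Perm.mem_finPairsLT] at hx
    rw [Finset.card_insert_of_notMem (by simp [hx.1.ne']), Finset.card_singleton]
  · -- hi
    intro S hS
    simp only [Finset.mem_filter, Finset.mem_univ, true_and] at hS
    obtain ⟨a, b, hab, hSab⟩ := Finset.card_eq_two.mp S.prop
    wlog hba : b < a generalizing a b
    · exact this b a hab.symm (by rw [hSab]; exact Finset.pair_comm a b)
        (lt_of_le_of_ne (not_lt.mp hba) hab)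
    have hmax : S.val.max' (aux_ne n S) = a := by
      rw [aux_max'_pair hSab, max_eq_left hba.le]
    have hmin : S.val.min' (aux_ne n S) = b := by
      rw [aux_min'_pair hSab, min_eq_right hba.le]
    simp only [Finset.mem_filter, Equiv.Perm.mem_finPairsLT]
    rw [hmax, hmin]
    exact ⟨hba, (aux_differ e S hba hSab).mp hS⟩
  · -- hj
    intro x hx
    simp only [Finset.mem_filter, Equiv.Perm.mem_finPairsLT] at hx
    simp only [Finset.mem_filter, Finset.mem_univ, true_and]
    exact (aux_differ e _ hx.1 rfl).mpr hx.2
  · -- left_inv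
    intro S hS
    obtain ⟨a, b, hab, hSab⟩ := Finset.card_eq_two.mp S.prop
    wlog hba : b < a generalizing a b
    · exact this b a hab.symm (by rw [hSab]; exact Finset.pair_comm a b)
        (lt_of_le_of_ne (not_lt.mp hba) hab)
    apply Subtype.ext
    dsimp only
    rw [aux_max'_pair hSab, aux_min'_pair hSab, max_eq_left hba.le, min_eq_right hba.le, hSab]
  · -- right_inv
    rintro ⟨x1, x2⟩ hx
    simp only [Finset.mem_filter, Equiv.Perm.mem_finPairsLT] at hx
    dsimp only
    rw [aux_max'_pair rfl, aux_min'_pair rfl, max_eq_left hx.1.le, min_eq_right hx.1.le]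

lemma aux_signAux_eq_sign {n : ℕ} (f : Equiv.Perm (Fin n)) :
    Equiv.Perm.signAux f = Equiv.Perm.sign f := by
  rcases lt_or_ge n 2 with h | h
  · have hf : f = 1 := by
      ext x
      have := x.2
      interval_cases n
      · exact x.elim0
      · omega
    rw [hf, Equiv.Perm.signAux_one, map_one]
  · have hsurj : Function.Surjective
        (MonoidHom.mk' Equiv.Perm.signAux Equiv.Perm.signAux_mul :
          Equiv.Perm (Fin n) →* ℤˣ) := by
      intro u
      rcases Int.units_eq_one_or u with rfl | rfl
      · exact ⟨1, Equiv.Perm.signAux_one n⟩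
      · refine ⟨Equiv.swap ⟨0, by omega⟩ ⟨1, by omega⟩, Equiv.Perm.signAux_swap ?_⟩
        simp [Fin.ext_iff]
    have := Equiv.Perm.eq_sign_of_surjective_hom hsurj
    exact DFunLike.congr_fun this f

lemma aux_sign_eq_pow {n : ℕ} (e : Equiv.Perm (Fin n)) :
    Equiv.Perm.sign e = (-1 : ℤˣ) ^ m (d n) (D e (d n)) := by
  rw [aux_m_eq e, ← Equiv.Perm.sign_inv, ← aux_signAux_eq_sign]
  unfold Equiv.Perm.signAux
  rw [Finset.prod_ite, Finset.prod_const, Finset.prod_const, one_pow, mul_one]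

/-- For any permutation `e` of `Fin n`, the number of relative inversions between the
canonical orientation `d` and `D e d` is even if and only if `sign e = 1`. This is the
group-level content of the fact that the Cartier map deloops the sign homomorphism. -/
theorem stmt_16 (n : ℕ) (e : Equiv.Perm (Fin n)) :
    Even (m (d n) (D e (d n))) ↔ Equiv.Perm.sign e = 1 := by
  rw [aux_sign_eq_pow e]
  constructor
  · intro h; exact h.neg_one_pow
  · intro h
    by_contra hodd
    rw [Nat.not_even_iff_odd] at hodd
    rw [hodd.neg_one_pow] at h
    exact absurd h (by decide)
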